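/- Let H be a separable complex Hilbert space, let p ≥ 1, and let x, y : ℤ → H form a pair of dual Riesz bases for H. For k ∈ Fin p and n ∈ ℤ define the backward-difference vectors z_{(k,n)} = ∑_{j=0}^{k} (−1)^{j} C(k,j) x_{pn−j} and the vectors w_{(k,n)} = (−1)^{k} ∑_{j=k}^{p−1} C(j,k) y_{pn−j}, where C(·,·) is the binomial coefficient. Then z : Fin p × ℤ → H is a Riesz basis for H with dual Riesz basis w; in particular, for every F ∈ H the family ((k,n) ↦ ⟨F, z_{(k,n)}⟩ w_{(k,n)}) has sum F (unconditional convergence in H). -/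

import Mathlib

noncomputable section
open scoped Classical

local notation "⟪" f ", " g "⟫" => @inner ℂ _ _ g f

/-- A family `x : ι → H` is a Riesz basis for `H` if it is the image of a Hilbert
(orthonormal) basis of `H` under a continuous linear equivalence of `H`. -/
def IsRieszBasis {H : Type*} [NormedAddCommGroup H] [InnerProductSpace ℂ H]
    {ι : Type*} (x : ι → H) : Prop :=
  ∃ (e : HilbertBasis ι ℂ H) (T : H ≃L[ℂ] H), ∀ i, x i = T (e i)

/-- Families `x, y : ι → H` form a pair of dual Riesz bases: both are Riesz bases,
they are biorthogonal, and `∑ᵢ ⟨f, yᵢ⟩ xᵢ = f` for every `f` (inner product linear in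
the first argument, conjugate-linear in the second). -/
def IsDualRieszBasisPair {H : Type*} [NormedAddCommGroup H] [InnerProductSpace ℂ H]
    {ι : Type*} (x y : ι → H) : Prop :=
  IsRieszBasis x ∧ IsRieszBasis y ∧
    (∀ i j, ⟪x i, y j⟫ = if i = j then (1 : ℂ) else 0) ∧
    ∀ f : H, HasSum (fun i => ⟪f, y i⟫ • x i) f

open scoped ENNReal NNReal

namespace Stmt13Aux

open lp Finset

variable {ι κ : Type*}

local notation "ℓ²(" ι ")" => lp (fun _ : ι => ℂ) 2

lemma h2pos : (0:ℝ) < (2:ℝ≥0∞).toReal := by norm_num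

lemma memℓp_comp (σ : ι ≃ κ) (f : ℓ²(ι)) : Memℓp (fun k => f (σ.symm k)) 2 := by
  apply memℓp_gen
  have hs := (lp.memℓp f).summable h2pos
  exact (σ.symm.summable_iff (f := fun i => ‖f i‖ ^ (2:ℝ≥0∞).toReal)).2 hs

/-- congruence of `ℓ²` spaces along an equivalence of index types -/
def lpCongr (σ : ι ≃ κ) : ℓ²(ι) ≃ₗᵢ[ℂ] ℓ²(κ) where
  toLinearEquiv :=
    { toFun := fun f => ⟨fun k => f (σ.symm k), memℓp_comp σ f⟩
      invFun := fun g => ⟨fun i => g (σ i), by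
        have h := memℓp_comp σ.symm g; simp only [Equiv.symm_symm] at h; exact h⟩
      map_add' := fun f g => rfl
      map_smul' := fun c f => rfl
      left_inv := fun f => by ext i; simp
      right_inv := fun g => by ext k; simp }
  norm_map' := fun f => by
    show ‖(⟨fun k => (f : ι → ℂ) (σ.symm k), memℓp_comp σ f⟩ : ℓ²(κ))‖ = ‖f‖
    rw [lp.norm_eq_tsum_rpow h2pos, lp.norm_eq_tsum_rpow h2pos f]
    congr 1
    exact σ.symm.tsum_eq (fun i => ‖(f : ι → ℂ) i‖ ^ (2:ℝ≥0∞).toReal)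

@[simp] lemma lpCongr_apply (σ : ι ≃ κ) (f : ℓ²(ι)) (k : κ) :
    (lpCongr σ f : κ → ℂ) k = f (σ.symm k) := rfl

lemma lpCongr_single (σ : ι ≃ κ) (i : ι) (a : ℂ) :
    lpCongr σ (lp.single 2 i a) = lp.single 2 (σ i) a := by
  ext k
  rw [lpCongr_apply, lp.single_apply, lp.single_apply]
  by_cases h : k = σ i
  · subst h; simp
  · rw [Pi.single_apply, Pi.single_apply, if_neg h, if_neg]
    intro hc
    exact h (by rw [← hc]; simp)

lemma lpCongr_symm_single (σ : ι ≃ κ) (k : κ) (a : ℂ) :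
    (lpCongr σ).symm (lp.single 2 k a) = lp.single 2 (σ.symm k) a := by
  apply (lpCongr σ).injective
  rw [LinearIsometryEquiv.apply_symm_apply, lpCongr_single]
  simp

/-- multiplication by a pointwise-bounded diagonal as a continuous linear map on `ℓ²` -/
def lpDiag (d : ι → ℂ) (hd : ∀ i, ‖d i‖ ≤ 1) : ℓ²(ι) →L[ℂ] ℓ²(ι) := by
  refine LinearMap.mkContinuous
    { toFun := fun f => ⟨fun i => d i * f i, ?_⟩
      map_add' := fun f g => by ext i; exact mul_add _ _ _
      map_smul' := fun c f => by ext i; exact mul_left_comm _ _ _ } 1 ?_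
  · apply memℓp_gen
    refine Summable.of_nonneg_of_le (fun i => ?_) (fun i => ?_) ((lp.memℓp f).summable h2pos)
    · positivity
    · apply Real.rpow_le_rpow (norm_nonneg _) _ (le_of_lt h2pos)
      rw [norm_mul]
      calc ‖d i‖ * ‖f i‖ ≤ 1 * ‖f i‖ := by
            exact mul_le_mul_of_nonneg_right (hd i) (norm_nonneg _)
        _ = ‖f i‖ := one_mul _
  · intro f
    rw [one_mul]
    apply lp.norm_le_of_tsum_le h2pos (norm_nonneg f)
    rw [lp.norm_rpow_eq_tsum h2pos f]
    apply Summable.tsum_le_tsum _ _ ((lp.memℓp f).summable h2pos)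
    · intro i
      apply Real.rpow_le_rpow (norm_nonneg _) _ (le_of_lt h2pos)
      show ‖d i * f i‖ ≤ ‖f i‖
      rw [norm_mul]
      calc ‖d i‖ * ‖f i‖ ≤ 1 * ‖f i‖ := mul_le_mul_of_nonneg_right (hd i) (norm_nonneg _)
        _ = ‖f i‖ := one_mul _
    · exact Summable.of_nonneg_of_le (fun i => by positivity)
        (fun i => Real.rpow_le_rpow (norm_nonneg _)
          (by show ‖d i * f i‖ ≤ ‖f i‖
              rw [norm_mul]
              calc ‖d i‖ * ‖f i‖ ≤ 1 * ‖f i‖ := mul_le_mul_of_nonneg_right (hd i) (norm_nonneg _)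
                _ = ‖f i‖ := one_mul _) (le_of_lt h2pos))
        ((lp.memℓp f).summable h2pos)

@[simp] lemma lpDiag_apply (d : ι → ℂ) (hd : ∀ i, ‖d i‖ ≤ 1) (f : ℓ²(ι)) (i : ι) :
    (lpDiag d hd f : ι → ℂ) i = d i * f i := rfl

variable {p : ℕ}

/-- selecting a single row, as an operator on `ℓ²(Fin p × ℤ)` -/
def rowSel (k : Fin p) : ℓ²(Fin p × ℤ) →L[ℂ] ℓ²(Fin p × ℤ) :=
  lpDiag (fun i => if i.1 = k then 1 else 0)
    (fun i => by by_cases h : i.1 = k <;> simp [h])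

/-- entry-moving operator -/
def Qop (k j : Fin p) : ℓ²(Fin p × ℤ) →L[ℂ] ℓ²(Fin p × ℤ) :=
  (rowSel k).comp
    ((lpCongr ((Equiv.swap k j).prodCongr (Equiv.refl ℤ))).toContinuousLinearEquiv :
        ℓ²(Fin p × ℤ) →L[ℂ] ℓ²(Fin p × ℤ))

lemma Qop_apply (k j : Fin p) (c : ℓ²(Fin p × ℤ)) (k' : Fin p) (n : ℤ) :
    (Qop k j c : Fin p × ℤ → ℂ) (k', n) = if k' = k then c (j, n) else 0 := by
  show (if k' = k then (1:ℂ) else 0) *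
      (c (((Equiv.swap k j).prodCongr (Equiv.refl ℤ)).symm (k', n))) = _
  by_cases h : k' = k
  · subst h
    simp [Equiv.swap_apply_left]
  · simp [h]

/-- the block-matrix operator on `ℓ²(Fin p × ℤ)` -/
def Mop (B : Fin p → Fin p → ℂ) : ℓ²(Fin p × ℤ) →L[ℂ] ℓ²(Fin p × ℤ) :=
  ∑ k : Fin p, ∑ j : Fin p, B k j • Qop k j

lemma Mop_apply (B : Fin p → Fin p → ℂ) (c : ℓ²(Fin p × ℤ)) (k : Fin p) (n : ℤ) :
    (Mop B c : Fin p × ℤ → ℂ) (k, n) = ∑ j : Fin p, B k j * c (j, n) := by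
  have h1 : (Mop B c : Fin p × ℤ → ℂ) (k, n)
      = ∑ k' : Fin p, ∑ j : Fin p, B k' j * ((Qop k' j c : Fin p × ℤ → ℂ) (k, n)) := by
    simp only [Mop, ContinuousLinearMap.sum_apply, ContinuousLinearMap.smul_apply]
    rw [lp.coeFn_sum]
    rw [Finset.sum_apply]
    apply Finset.sum_congr rfl
    intro k' _
    rw [lp.coeFn_sum, Finset.sum_apply]
    apply Finset.sum_congr rfl
    intro j _
    rw [lp.coeFn_smul]
    rfl
  rw [h1]
  rw [Finset.sum_comm]
  rw [Finset.sum_congr rfl (fun j _ => Finset.sum_congr rfl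
    (fun k' _ => by rw [Qop_apply]))]
  apply Finset.sum_congr rfl
  intro j _
  simp only [mul_ite, mul_zero, Finset.sum_ite_eq, Finset.mem_univ, if_true]

lemma Mop_Mop (B B' : Fin p → Fin p → ℂ)
    (h : ∀ r c, ∑ j : Fin p, B r j * B' j c = if r = c then 1 else 0)
    (cv : ℓ²(Fin p × ℤ)) : Mop B (Mop B' cv) = cv := by
  ext i
  obtain ⟨k, n⟩ := i
  rw [Mop_apply]
  have : ∀ j : Fin p, B k j * (Mop B' cv : Fin p × ℤ → ℂ) (j, n)
      = ∑ j' : Fin p, B k j * (B' j j' * cv (j', n)) := by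
    intro j
    rw [Mop_apply, Finset.mul_sum]
  rw [Finset.sum_congr rfl (fun j _ => this j), Finset.sum_comm]
  have : ∀ j' : Fin p, (∑ j : Fin p, B k j * (B' j j' * cv (j', n)))
      = (if k = j' then 1 else 0) * cv (j', n) := by
    intro j'
    rw [← h k j', Finset.sum_mul]
    exact Finset.sum_congr rfl fun j _ => by ring
  rw [Finset.sum_congr rfl (fun j' _ => this j')]
  simp only [ite_mul, one_mul, zero_mul, Finset.sum_ite_eq, Finset.mem_univ, if_true]

/-- the block-matrix operator as a continuous linear equivalence -/
def MEquiv (B B' : Fin p → Fin p → ℂ)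
    (h : ∀ r c, ∑ j : Fin p, B r j * B' j c = if r = c then 1 else 0)
    (h' : ∀ r c, ∑ j : Fin p, B' r j * B j c = if r = c then 1 else 0) :
    ℓ²(Fin p × ℤ) ≃L[ℂ] ℓ²(Fin p × ℤ) :=
  ContinuousLinearEquiv.equivOfInverse (Mop B) (Mop B') (Mop_Mop B' B h') (Mop_Mop B B' h)

lemma Mop_single (B : Fin p → Fin p → ℂ) (k : Fin p) (n : ℤ) :
    Mop B (lp.single 2 (k, n) (1:ℂ)) = ∑ r : Fin p, B r k • lp.single 2 (r, n) (1:ℂ) := by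
  ext i
  obtain ⟨k', n'⟩ := i
  rw [Mop_apply]
  rw [lp.coeFn_sum, Finset.sum_apply]
  have hr : ∀ r : Fin p, (B r k • lp.single 2 (r, n) (1:ℂ) : ℓ²(Fin p × ℤ)) (k', n')
      = B r k * (if (k', n') = ((r, n) : Fin p × ℤ) then 1 else 0) := by
    intro r
    rw [lp.coeFn_smul]
    show B r k * (lp.single 2 (r, n) (1:ℂ) : Fin p × ℤ → ℂ) (k', n') = _
    rw [lp.single_apply]
    by_cases hh : ((k', n') : Fin p × ℤ) = (r, n)
    · rw [Pi.single_apply]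
    · rw [Pi.single_apply]
  rw [Finset.sum_congr rfl (fun r _ => hr r)]
  have hl : ∀ j : Fin p, B k' j * (lp.single 2 (k, n) (1:ℂ) : Fin p × ℤ → ℂ) (j, n')
      = B k' j * (if ((j, n') : Fin p × ℤ) = (k, n) then 1 else 0) := by
    intro j
    rw [lp.single_apply]
    by_cases hh : ((j, n') : Fin p × ℤ) = (k, n)
    · rw [Pi.single_apply]
    · rw [Pi.single_apply]
  rw [Finset.sum_congr rfl (fun j _ => hl j)]
  by_cases hn : n' = n
  · subst hn
    simp [Prod.ext_iff, eq_comm]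
  · have h1 : ∀ j : Fin p, (((j, n') : Fin p × ℤ) = (k, n)) = False := by
      intro j; simp [Prod.ext_iff, hn]
    have h2 : ∀ r : Fin p, (((k', n') : Fin p × ℤ) = (r, n)) = False := by
      intro r; simp [Prod.ext_iff, hn]
    simp [h1, h2]

/-- the index equivalence `(k, n) ↦ p n - k` -/
def phiEquiv (p : ℕ) (hp : 1 ≤ p) : Fin p × ℤ ≃ ℤ where
  toFun i := (p : ℤ) * i.2 - (i.1 : ℤ)
  invFun m := (⟨((-m) % (p : ℤ)).toNat, by
      have h0 : (0:ℤ) < (p:ℤ) := by exact_mod_cast hp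
      have h1 : 0 ≤ (-m) % (p : ℤ) := Int.emod_nonneg _ (by omega)
      have h2 : (-m) % (p : ℤ) < (p : ℤ) := Int.emod_lt_of_pos _ h0
      omega⟩, (m + (-m) % (p : ℤ)) / (p : ℤ))
  left_inv := by
    rintro ⟨k, n⟩
    have h0 : (0:ℤ) < (p:ℤ) := by exact_mod_cast hp
    have hk0 : (0:ℤ) ≤ (k : ℤ) := Int.natCast_nonneg _
    have hkp : ((k : ℤ)) < (p : ℤ) := by exact_mod_cast k.isLt
    have hmod : (-((p:ℤ) * n - (k:ℤ))) % (p:ℤ) = (k:ℤ) := by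
      have : -((p:ℤ) * n - (k:ℤ)) = (k:ℤ) + (p:ℤ) * (-n) := by ring
      rw [this, Int.add_mul_emod_self_left, Int.emod_eq_of_lt hk0 hkp]
    refine Prod.ext ?_ ?_
    · apply Fin.ext
      show (((-((p:ℤ) * n - (k:ℤ))) % (p:ℤ)).toNat) = (k : ℕ)
      rw [hmod]; simp
    · show ((p:ℤ) * n - (k:ℤ) + (-((p:ℤ) * n - (k:ℤ))) % (p:ℤ)) / (p:ℤ) = n
      rw [hmod]
      have : (p:ℤ) * n - (k:ℤ) + (k:ℤ) = (p:ℤ) * n := by ring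
      rw [this, Int.mul_ediv_cancel_left _ (by omega)]
  right_inv := by
    intro m
    have h0 : (0:ℤ) < (p:ℤ) := by exact_mod_cast hp
    have h1 : 0 ≤ (-m) % (p : ℤ) := Int.emod_nonneg _ (by omega)
    show (p:ℤ) * ((m + (-m) % (p : ℤ)) / (p : ℤ)) - (((-m) % (p : ℤ)).toNat : ℤ) = m
    rw [Int.toNat_of_nonneg h1]
    have hq : m + (-m) % (p:ℤ) = (p:ℤ) * (-((-m) / (p:ℤ))) := by
      rw [Int.emod_def]; ring
    rw [hq, Int.mul_ediv_cancel_left _ (by omega)]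
    rw [← hq]; ring

/-- reindexing a Hilbert basis -/
def HBreindex {H : Type*} [NormedAddCommGroup H] [InnerProductSpace ℂ H]
    (b : HilbertBasis ι ℂ H) (σ : ι ≃ κ) : HilbertBasis κ ℂ H :=
  HilbertBasis.ofRepr (b.repr.trans (lpCongr σ))

lemma HBreindex_apply {H : Type*} [NormedAddCommGroup H] [InnerProductSpace ℂ H]
    (b : HilbertBasis ι ℂ H) (σ : ι ≃ κ) (i : κ) :
    HBreindex b σ i = b (σ.symm i) := by
  show (HBreindex b σ).repr.symm (lp.single 2 i 1) = b.repr.symm (lp.single 2 (σ.symm i) 1)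
  show (b.repr.trans (lpCongr σ)).symm (lp.single 2 i 1) = _
  rw [LinearIsometryEquiv.symm_trans]
  show b.repr.symm ((lpCongr σ).symm (lp.single 2 i 1)) = _
  rw [lpCongr_symm_single]

/-- the binomial sign matrix -/
def Amat (p : ℕ) (r c : Fin p) : ℂ := (-1 : ℂ) ^ (r : ℕ) * (Nat.choose c r : ℂ)

lemma conj_Amat (r c : Fin p) : (starRingEnd ℂ) (Amat p r c) = Amat p r c := by
  simp [Amat, map_mul, map_pow]

lemma keyS {r c : ℕ} (hr : r < p) (hc : c < p) :
    ∑ j ∈ Finset.range p, (-1 : ℂ) ^ j * (Nat.choose c j : ℂ) * (Nat.choose j r : ℂ)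
      = (-1 : ℂ) ^ r * (if r = c then 1 else 0) := by
  by_cases hrc : c < r
  · rw [Finset.sum_eq_zero, if_neg (by omega), mul_zero]
    intro j hj
    by_cases hjc : j ≤ c
    · have : Nat.choose j r = 0 := Nat.choose_eq_zero_of_lt (by omega)
      rw [this]; simp
    · have : Nat.choose c j = 0 := Nat.choose_eq_zero_of_lt (by omega)
      rw [this]; simp
  · push_neg at hrc
    -- restrict the sum to Icc r c
    have hsub : Finset.Icc r c ⊆ Finset.range p := by
      intro j hj
      simp only [Finset.mem_Icc] at hj
      simp only [Finset.mem_range]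
      omega
    rw [← Finset.sum_subset hsub ?zero]
    case zero =>
      intro j _ hj
      simp only [Finset.mem_Icc, not_and_or, not_le] at hj
      rcases hj with hj | hj
      · have : Nat.choose j r = 0 := Nat.choose_eq_zero_of_lt hj
        rw [this]; simp
      · have : Nat.choose c j = 0 := Nat.choose_eq_zero_of_lt hj
        rw [this]; simp
    have hIcc : Finset.Icc r c = Finset.Ico r (c + 1) := by
      rw [Finset.Ico_add_one_right_eq_Icc]
    rw [hIcc, Finset.sum_Ico_eq_sum_range]
    have hterm : ∀ t, t < c + 1 - r →
        (-1 : ℂ) ^ (r + t) * (Nat.choose c (r + t) : ℂ) * (Nat.choose (r + t) r : ℂ)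
          = ((-1 : ℂ) ^ r * (Nat.choose c r : ℂ)) *
            ((-1 : ℂ) ^ t * (Nat.choose (c - r) t : ℂ)) := by
      intro t ht
      have hmul : Nat.choose c (r + t) * Nat.choose (r + t) r
          = Nat.choose c r * Nat.choose (c - r) t := by
        have := Nat.choose_mul (n := c) (k := r + t) (s := r) (by omega)
        simpa using this
      have hcast : (Nat.choose c (r + t) : ℂ) * (Nat.choose (r + t) r : ℂ)
          = (Nat.choose c r : ℂ) * (Nat.choose (c - r) t : ℂ) := by
        exact_mod_cast congrArg (Nat.cast : ℕ → ℂ) hmul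
      rw [pow_add]
      calc (-1 : ℂ) ^ r * (-1 : ℂ) ^ t * (Nat.choose c (r + t) : ℂ) * (Nat.choose (r + t) r : ℂ)
          = (-1 : ℂ) ^ r * (-1 : ℂ) ^ t *
              ((Nat.choose c (r + t) : ℂ) * (Nat.choose (r + t) r : ℂ)) := by ring
        _ = (-1 : ℂ) ^ r * (-1 : ℂ) ^ t *
              ((Nat.choose c r : ℂ) * (Nat.choose (c - r) t : ℂ)) := by rw [hcast]
        _ = ((-1 : ℂ) ^ r * (Nat.choose c r : ℂ)) *
              ((-1 : ℂ) ^ t * (Nat.choose (c - r) t : ℂ)) := by ring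
    rw [Finset.sum_congr rfl (fun t ht => hterm t (Finset.mem_range.mp ht))]
    rw [← Finset.mul_sum]
    have hrange : c + 1 - r = (c - r) + 1 := by omega
    rw [hrange]
    have halt : ∑ t ∈ Finset.range ((c - r) + 1),
        (-1 : ℂ) ^ t * (Nat.choose (c - r) t : ℂ)
          = if c - r = 0 then 1 else 0 := by
      have := Int.alternating_sum_range_choose (n := c - r)
      have hc2 : ((∑ t ∈ Finset.range ((c - r) + 1),
          (-1 : ℤ) ^ t * (Nat.choose (c - r) t : ℤ) : ℤ) : ℂ)
            = ∑ t ∈ Finset.range ((c - r) + 1),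
              (-1 : ℂ) ^ t * (Nat.choose (c - r) t : ℂ) := by
        push_cast
        rfl
      rw [← hc2, this]
      split <;> simp
    rw [halt]
    by_cases heq : r = c
    · subst heq
      simp
    · rw [if_neg (by omega), if_neg heq]
      simp

lemma Amat_mul (hp : 1 ≤ p) (r c : Fin p) :
    ∑ j : Fin p, Amat p r j * Amat p j c = if r = c then 1 else 0 := by
  have h1 : ∀ j : Fin p, Amat p r j * Amat p j c
      = (-1 : ℂ) ^ (r : ℕ) * ((-1 : ℂ) ^ (j : ℕ) * (Nat.choose c j : ℂ) * (Nat.choose j r : ℂ)) := by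
    intro j
    simp only [Amat]
    ring
  rw [Finset.sum_congr rfl (fun j _ => h1 j), ← Finset.mul_sum]
  have h2 : ∑ j : Fin p, (-1 : ℂ) ^ (j : ℕ) * (Nat.choose c j : ℂ) * (Nat.choose j r : ℂ)
      = ∑ j ∈ Finset.range p, (-1 : ℂ) ^ j * (Nat.choose c j : ℂ) * (Nat.choose j r : ℂ) :=
    Fin.sum_univ_eq_sum_range
      (fun j => (-1 : ℂ) ^ j * (Nat.choose c j : ℂ) * (Nat.choose j r : ℂ)) p
  rw [h2, keyS r.isLt c.isLt, ← mul_assoc, ← mul_pow]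
  simp only [neg_mul_neg, one_mul, one_pow]
  by_cases heq : r = c
  · subst heq; simp
  · rw [if_neg (fun hh : (r:ℕ) = (c:ℕ) => heq (Fin.ext hh)), if_neg heq]

lemma Amat_mul_T (hp : 1 ≤ p) (r c : Fin p) :
    ∑ j : Fin p, Amat p j r * Amat p c j = if r = c then 1 else 0 := by
  have : ∀ j : Fin p, Amat p j r * Amat p c j = Amat p c j * Amat p j r :=
    fun j => mul_comm _ _
  rw [Finset.sum_congr rfl (fun j _ => this j), Amat_mul hp c r]
  simp [eq_comm]

lemma MEquiv_apply (B B' : Fin p → Fin p → ℂ) (h h') (c : ℓ²(Fin p × ℤ)) :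
    MEquiv B B' h h' c = Mop B c := rfl

section Hilbert

variable {H : Type*} [NormedAddCommGroup H] [InnerProductSpace ℂ H] [CompleteSpace H]

lemma rb_test {ι : Type*} (b : HilbertBasis ι ℂ H) (T : H ≃L[ℂ] H) (g : H)
    (hg : ∀ i, (inner ℂ (T (b i)) g : ℂ) = 0) : g = 0 := by
  set T' : H →L[ℂ] H := (T : H →L[ℂ] H) with hT'
  have h0 : b.repr (ContinuousLinearMap.adjoint T' g) = 0 := by
    ext i
    rw [lp.coeFn_zero, Pi.zero_apply, b.repr_apply_apply,
      ContinuousLinearMap.adjoint_inner_right]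
    exact hg i
  have hAg : ContinuousLinearMap.adjoint T' g = 0 := by
    have := congrArg b.repr.symm h0
    simpa using this
  have hcomp : (T' ∘L ((T.symm : H →L[ℂ] H))) = ContinuousLinearMap.id ℂ H := by
    ext v
    simp [hT']
  have hfin : ContinuousLinearMap.adjoint ((T.symm : H →L[ℂ] H))
      (ContinuousLinearMap.adjoint T' g) = g := by
    rw [← ContinuousLinearMap.comp_apply, ← ContinuousLinearMap.adjoint_comp, hcomp]
    simp [ContinuousLinearMap.adjoint_id]
  rw [hAg, map_zero] at hfin
  exact hfin.symm

lemma rb_hasSum {ι : Type*} (b : HilbertBasis ι ℂ H) (T : H ≃L[ℂ] H) (c : ℓ²(ι)) :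
    HasSum (fun i => c i • T (b i)) (T (b.repr.symm c)) := by
  have h := (b.hasSum_repr_symm c).mapL (T : H →L[ℂ] H)
  have he : (fun i => (T : H →L[ℂ] H) (c i • b i)) = fun i => c i • T (b i) := by
    funext i
    rw [map_smul]
    rfl
  rwa [he] at h

lemma dual_expansion {ι : Type*} (b b' : HilbertBasis ι ℂ H) (Tv Tw : H ≃L[ℂ] H)
    (v u : ι → H) (hv : ∀ i, v i = Tv (b i)) (hu : ∀ i, u i = Tw (b' i))
    (hbio : ∀ i j, (inner ℂ (u j) (v i) : ℂ) = if i = j then 1 else 0)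
    (f : H) : HasSum (fun i => (inner ℂ (u i) f : ℂ) • v i) f := by
  set g : H := ContinuousLinearMap.adjoint (Tw : H →L[ℂ] H) f with hg
  have hc : ∀ i, (inner ℂ (u i) f : ℂ) = b'.repr g i := by
    intro i
    rw [b'.repr_apply_apply, hg, ContinuousLinearMap.adjoint_inner_right, hu i]
    rfl
  have hsum : HasSum (fun i => (b'.repr g i) • v i) (Tv (b.repr.symm (b'.repr g))) := by
    have h := rb_hasSum b Tv (b'.repr g)
    have he : (fun i => (b'.repr g i) • Tv (b i)) = fun i => (b'.repr g i) • v i := by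
      funext i; rw [hv i]
    rwa [he] at h
  set U : H := Tv (b.repr.symm (b'.repr g)) with hU
  have hufi : ∀ j, (inner ℂ (u j) U : ℂ) = inner ℂ (u j) f := by
    intro j
    have h2 := hsum.mapL (innerSL ℂ (u j))
    have h3 : (fun i => (innerSL ℂ (u j)) ((b'.repr g i) • v i))
        = fun i => if i = j then b'.repr g j else 0 := by
      funext i
      rw [innerSL_apply_apply, inner_smul_right, hbio i j]
      by_cases hij : i = j
      · subst hij; simp
      · simp [hij]
    rw [h3] at h2
    have h4 : HasSum (fun i => if i = j then b'.repr g j else 0) (b'.repr g j) :=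
      hasSum_ite_eq j (b'.repr g j)
    have h5 : (innerSL ℂ (u j)) U = b'.repr g j := h2.unique h4
    rw [innerSL_apply_apply] at h5
    rw [h5, hc j]
  have hUf : U = f := by
    have hdiff : ∀ j, (inner ℂ (Tw (b' j)) (U - f) : ℂ) = 0 := by
      intro j
      rw [← hu j, inner_sub_right, hufi j, sub_self]
    exact sub_eq_zero.mp (rb_test b' Tw (U - f) hdiff)
  have he2 : (fun i => (inner ℂ (u i) f : ℂ) • v i) = fun i => (b'.repr g i) • v i := by
    funext i; rw [hc i]
  rw [he2, ← hUf]
  exact hsum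

lemma rb_transfer (b : HilbertBasis ℤ ℂ H) (T : H ≃L[ℂ] H) (x : ℤ → H)
    (hx : ∀ m, x m = T (b m)) {p : ℕ} (hp : 1 ≤ p) (B : Fin p → Fin p → ℂ)
    (hB : ∀ r c, ∑ j : Fin p, B r j * B j c = if r = c then 1 else 0)
    (v : Fin p × ℤ → H)
    (hv : ∀ (k : Fin p) (n : ℤ), v (k, n) = ∑ r : Fin p, B r k • x ((p:ℤ) * n - (r:ℤ))) :
    ∃ (b' : HilbertBasis (Fin p × ℤ) ℂ H) (T' : H ≃L[ℂ] H), ∀ i, v i = T' (b' i) := by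
  set φ := phiEquiv p hp with hφ
  set b' : HilbertBasis (Fin p × ℤ) ℂ H := HBreindex b φ.symm with hb'
  refine ⟨b', ((b'.repr.toContinuousLinearEquiv).trans (MEquiv B B hB hB)).trans
    ((b'.repr.symm.toContinuousLinearEquiv).trans T), ?_⟩
  rintro ⟨k, n⟩
  show v (k, n) = T (b'.repr.symm (MEquiv B B hB hB (b'.repr (b' (k, n)))))
  rw [b'.repr_self, MEquiv_apply, Mop_single, map_sum, map_sum]
  rw [hv k n]
  apply Finset.sum_congr rfl
  intro r _
  rw [map_smul, map_smul]
  congr 1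
  rw [b'.repr_symm_single, hb', HBreindex_apply, Equiv.symm_symm, hx]
  rfl

end Hilbert

section Hilbert2

variable {H : Type*} [NormedAddCommGroup H] [InnerProductSpace ℂ H]

lemma biorth_zw {p : ℕ} (hp : 1 ≤ p) (x y : ℤ → H)
    (hbi : ∀ i j, (inner ℂ (y j) (x i) : ℂ) = if i = j then 1 else 0)
    (z w : Fin p × ℤ → H)
    (hz' : ∀ (k : Fin p) (n : ℤ), z (k, n)
      = ∑ r : Fin p, Amat p r k • x ((p:ℤ) * n - (r:ℤ)))
    (hw' : ∀ (k : Fin p) (n : ℤ), w (k, n)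
      = ∑ r : Fin p, Amat p k r • y ((p:ℤ) * n - (r:ℤ))) :
    ∀ i j : Fin p × ℤ, (inner ℂ (w j) (z i) : ℂ) = if i = j then 1 else 0 := by
  rintro ⟨k, n⟩ ⟨k', n'⟩
  rw [hz' k n, hw' k' n', sum_inner]
  have hstep1 : ∀ r' : Fin p,
      (inner ℂ (Amat p k' r' • y ((p:ℤ) * n' - (r':ℤ)))
        (∑ r : Fin p, Amat p r k • x ((p:ℤ) * n - (r:ℤ))) : ℂ)
      = Amat p k' r' * (if n = n' then Amat p r' k else 0) := by
    intro r'
    rw [inner_smul_left, conj_Amat, inner_sum]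
    congr 1
    have hterm : ∀ r : Fin p,
        (inner ℂ (y ((p:ℤ) * n' - (r':ℤ))) (Amat p r k • x ((p:ℤ) * n - (r:ℤ))) : ℂ)
        = Amat p r k * (if ((p:ℤ) * n - (r:ℤ)) = ((p:ℤ) * n' - (r':ℤ)) then 1 else 0) := by
      intro r
      rw [inner_smul_right, hbi]
    rw [Finset.sum_congr rfl (fun r _ => hterm r)]
    by_cases hn : n = n'
    · subst hn
      rw [if_pos rfl]
      have hiff : ∀ r : Fin p, ((p:ℤ) * n - (r:ℤ) = (p:ℤ) * n - (r':ℤ)) ↔ r = r' := by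
        intro r
        constructor
        · intro h
          have : (r:ℤ) = (r':ℤ) := by omega
          exact Fin.ext (by exact_mod_cast this)
        · intro h; rw [h]
      rw [Finset.sum_congr rfl (fun r _ => by rw [if_congr (hiff r) rfl rfl])]
      simp only [mul_ite, mul_one, mul_zero, Finset.sum_ite_eq', Finset.mem_univ, if_true]
    · rw [if_neg hn, Finset.sum_eq_zero]
      intro r _
      rw [if_neg, mul_zero]
      intro hcon
      apply hn
      have hr : (r:ℤ) < p := by exact_mod_cast r.isLt
      have hr' : (r':ℤ) < p := by exact_mod_cast r'.isLt
      have h0r : (0:ℤ) ≤ (r:ℤ) := Int.natCast_nonneg _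
      have h0r' : (0:ℤ) ≤ (r':ℤ) := Int.natCast_nonneg _
      have hp0 : (0:ℤ) < (p:ℤ) := by exact_mod_cast hp
      have hexp : (p:ℤ) * (n - n') = (p:ℤ) * n - (p:ℤ) * n' := mul_sub _ _ _
      have hd : (p:ℤ) * (n - n') = (r:ℤ) - (r':ℤ) := by rw [hexp]; omega
      rcases lt_trichotomy (n - n') 0 with hlt | heq | hgt
      · have h1 : n - n' ≤ -1 := by omega
        have h2 : (p:ℤ) * (n - n') ≤ (p:ℤ) * (-1) :=
          mul_le_mul_of_nonneg_left h1 (le_of_lt hp0)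
        rw [hd] at h2
        omega
      · omega
      · have h1 : (1:ℤ) ≤ n - n' := by omega
        have h2 : (p:ℤ) * 1 ≤ (p:ℤ) * (n - n') :=
          mul_le_mul_of_nonneg_left h1 (le_of_lt hp0)
        rw [hd] at h2
        omega
  rw [Finset.sum_congr rfl (fun r' _ => hstep1 r')]
  by_cases hn : n = n'
  · subst hn
    have hcoll : ∀ r' : Fin p, Amat p k' r' * (if n = n then Amat p r' k else 0)
        = Amat p k' r' * Amat p r' k := by
      intro r'; rw [if_pos rfl]
    rw [Finset.sum_congr rfl (fun r' _ => hcoll r'), Amat_mul hp k' k]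
    by_cases hk : k = k'
    · subst hk
      simp
    · rw [if_neg (fun h : k' = k => hk h.symm), if_neg (by simp [Prod.ext_iff, hk])]
  · have : ∀ r' : Fin p, Amat p k' r' * (if n = n' then Amat p r' k else 0) = 0 := by
      intro r'
      rw [if_neg hn, mul_zero]
    rw [Finset.sum_congr rfl (fun r' _ => this r'), Finset.sum_const_zero,
      if_neg (by simp [Prod.ext_iff, hn])]

end Hilbert2
end Stmt13Aux

open Stmt13Aux in
theorem stmt13 {H : Type*} [NormedAddCommGroup H] [InnerProductSpace ℂ H]
    [CompleteSpace H] [TopologicalSpace.SeparableSpace H]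
    {p : ℕ} (hp : 1 ≤ p) (x y : ℤ → H) (hxy : IsDualRieszBasisPair x y)
    (z w : Fin p × ℤ → H)
    (hz : ∀ (k : Fin p) (n : ℤ), z (k, n) =
      ∑ j ∈ Finset.range ((k : ℕ) + 1),
        ((-1 : ℂ) ^ j * (Nat.choose k j : ℂ)) • x ((p : ℤ) * n - (j : ℤ)))
    (hw : ∀ (k : Fin p) (n : ℤ), w (k, n) =
      (-1 : ℂ) ^ (k : ℕ) • ∑ j ∈ Finset.Icc (k : ℕ) (p - 1),
        (Nat.choose j k : ℂ) • y ((p : ℤ) * n - (j : ℤ))) :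
    IsDualRieszBasisPair z w ∧
      ∀ F : H, HasSum (fun i : Fin p × ℤ => ⟪F, z i⟫ • w i) F := by
  classical
  obtain ⟨⟨e, T, hxT⟩, ⟨ε, Ty, hyT⟩, hbi, hexp⟩ := hxy
  have hz' : ∀ (k : Fin p) (n : ℤ), z (k, n)
      = ∑ r : Fin p, Amat p r k • x ((p:ℤ) * n - (r:ℤ)) := by
    intro k n
    rw [hz k n]
    have hk := k.isLt
    have hsub : Finset.range ((k:ℕ) + 1) ⊆ Finset.range p := by
      intro j hj
      simp only [Finset.mem_range] at *
      omega
    have hzero : ∀ j ∈ Finset.range p, j ∉ Finset.range ((k:ℕ) + 1) →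
        ((-1:ℂ) ^ j * (Nat.choose k j : ℂ)) • x ((p:ℤ) * n - (j:ℤ)) = 0 := by
      intro j _ hj
      simp only [Finset.mem_range, not_lt] at hj
      rw [Nat.choose_eq_zero_of_lt (by omega)]
      simp
    rw [Finset.sum_subset hsub hzero,
      ← Fin.sum_univ_eq_sum_range
        (fun j => ((-1:ℂ) ^ j * (Nat.choose k j : ℂ)) • x ((p:ℤ) * n - (j:ℤ))) p]
    apply Finset.sum_congr rfl
    intro r _
    rfl
  have hw' : ∀ (k : Fin p) (n : ℤ), w (k, n)
      = ∑ r : Fin p, Amat p k r • y ((p:ℤ) * n - (r:ℤ)) := by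
    intro k n
    rw [hw k n, Finset.smul_sum]
    have hk := k.isLt
    have hsub : Finset.Icc (k:ℕ) (p - 1) ⊆ Finset.range p := by
      intro j hj
      simp only [Finset.mem_Icc] at hj
      simp only [Finset.mem_range]
      omega
    have hzero : ∀ j ∈ Finset.range p, j ∉ Finset.Icc (k:ℕ) (p - 1) →
        (-1:ℂ) ^ (k:ℕ) • ((Nat.choose j k : ℂ) • y ((p:ℤ) * n - (j:ℤ))) = 0 := by
      intro j hjr hj
      simp only [Finset.mem_range] at hjr
      simp only [Finset.mem_Icc, not_and_or, not_le] at hj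
      have hjk : j < (k:ℕ) := by omega
      rw [Nat.choose_eq_zero_of_lt hjk]
      simp
    rw [Finset.sum_subset hsub hzero,
      ← Fin.sum_univ_eq_sum_range
        (fun j => (-1:ℂ) ^ (k:ℕ) • ((Nat.choose j k : ℂ) • y ((p:ℤ) * n - (j:ℤ)))) p]
    apply Finset.sum_congr rfl
    intro r _
    rw [smul_smul]
    rfl
  have hbi' : ∀ i j : ℤ, (inner ℂ (y j) (x i) : ℂ) = if i = j then 1 else 0 := by
    intro i j
    rw [hbi i j]
    by_cases h : i = j <;> simp [h]
  have hZW := biorth_zw hp x y hbi' z w hz' hw'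
  obtain ⟨bz, Tz, hzT⟩ := rb_transfer e T x hxT hp (Amat p) (Amat_mul hp) z hz'
  obtain ⟨bw, Tw, hwT⟩ := rb_transfer ε Ty y hyT hp (fun r c => Amat p c r)
      (fun r c => Amat_mul_T hp r c) w (fun k n => hw' k n)
  have hZWany : ∀ {D : (i : Fin p × ℤ) → (j : Fin p × ℤ) → Decidable (i = j)},
      ∀ i j : Fin p × ℤ, (inner ℂ (w j) (z i) : ℂ) = @ite ℂ (i = j) (D i j) 1 0 := by
    intro D i j
    rw [hZW i j]
    by_cases h : i = j <;> simp [h]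
  refine ⟨⟨⟨bz, Tz, hzT⟩, ⟨bw, Tw, hwT⟩, fun i j => hZWany (D := fun i j => Classical.propDecidable _) i j, ?_⟩, ?_⟩
  · intro f
    exact dual_expansion bz bw Tz Tw z w hzT hwT (fun i j => hZWany (D := fun i j => Classical.propDecidable _) i j) f
  · intro F
    refine dual_expansion bw bz Tw Tz w z hwT hzT ?_ F
    intro i j
    rw [← inner_conj_symm, hZW j i]
    by_cases h : j = i
    · subst h
      simp
    · have h2 : ¬ i = j := fun hh => h hh.symm
      simp [h, h2]
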